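/- Let p ∈ (0,1). Let U₀, U₁ and I be mutually independent random variables, where U₀ and U₁ are uniformly distributed on [0,1] and I is Bernoulli distributed with success probability p. Then the random variable U₀^{1-p} · U₁^{I} is uniformly distributed on [0,1]. -/

import Mathlib

open MeasureTheory ProbabilityTheory Set

lemma aux_meas_rpow2 : Measurable fun q : ℝ × ℝ => q.1 ^ q.2 := by measurability

lemma aux_meas_rpow_const (c : ℝ) : Measurable fun x : ℝ => x ^ c :=
  aux_meas_rpow2.comp (measurable_id.prodMk measurable_const)

lemma aux_meas_prod (c : ℝ) : Measurable fun z : ℝ × ℝ => z.1 ^ c * z.2 :=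
  ((aux_meas_rpow_const c).comp measurable_fst).mul measurable_snd


lemma aux_rpow_le {p t : ℝ} (hp : 0 < p) (hp1 : p < 1) (ht : t ∈ Icc (0:ℝ) 1) :
    t ^ (1/(1-p)) ≤ t := by
  have h1p : 0 < 1 - p := by linarith
  rcases eq_or_lt_of_le ht.1 with h | h
  · rw [← h, Real.zero_rpow (by positivity)]
  · have h1 : 1 ≤ 1/(1-p) := by rw [le_div_iff₀ h1p]; linarith
    calc t ^ (1/(1-p)) ≤ t ^ (1:ℝ) :=
          Real.rpow_le_rpow_of_exponent_ge h ht.2 h1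
      _ = t := Real.rpow_one t

lemma aux_s_pow {p t : ℝ} (hp : 0 < p) (hp1 : p < 1) (ht : t ∈ Icc (0:ℝ) 1) :
    (t ^ (1/(1-p))) ^ (1 - p) = t := by
  have h1p : (1:ℝ) - p ≠ 0 := by intro h; linarith [sub_eq_zero.mp h]
  rw [← Real.rpow_mul ht.1]
  rw [one_div_mul_cancel h1p, Real.rpow_one]

lemma aux_t_mul_s_pow {p t : ℝ} (hp : 0 < p) (hp1 : p < 1) (ht : t ∈ Icc (0:ℝ) 1) :
    t * (t ^ (1/(1-p))) ^ p = t ^ (1/(1-p)) := by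
  have h1p : 0 < 1 - p := by linarith
  rcases eq_or_lt_of_le ht.1 with h | h
  · rw [← h, Real.zero_rpow (by positivity), Real.zero_rpow (by positivity), zero_mul]
  · have key : (1:ℝ) + 1/(1-p)*p = 1/(1-p) := by field_simp; ring
    calc t * (t ^ (1/(1-p))) ^ p = t ^ (1:ℝ) * t ^ (1/(1-p)*p) := by
          rw [← Real.rpow_mul h.le, Real.rpow_one]
      _ = t ^ (1 + 1/(1-p)*p) := (Real.rpow_add h _ _).symm
      _ = t ^ (1/(1-p)) := by rw [key]

lemma aux_cdf_one {p t : ℝ} (hp : 0 < p) (hp1 : p < 1) (ht : t ∈ Icc (0:ℝ) 1) :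
    volume.restrict (Icc (0:ℝ) 1) {x : ℝ | x ^ (1 - p) ≤ t} =
      ENNReal.ofReal (t ^ (1/(1-p))) := by
  have h1p : 0 < 1 - p := by linarith
  set s := t ^ (1/(1-p)) with hs
  have hs0 : 0 ≤ s := Real.rpow_nonneg ht.1 _
  have hs1 : s ≤ 1 := Real.rpow_le_one ht.1 ht.2 (by positivity)
  have hst : s ^ (1 - p) = t := aux_s_pow hp hp1 ht
  have hms : MeasurableSet {x : ℝ | x ^ (1 - p) ≤ t} := by
    have hm : Measurable fun x : ℝ => x ^ (1 - p) := by measurability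
    exact measurableSet_le hm measurable_const
  rw [Measure.restrict_apply hms]
  have hset : {x : ℝ | x ^ (1 - p) ≤ t} ∩ Icc 0 1 = Icc 0 s := by
    ext x
    simp only [mem_inter_iff, mem_setOf_eq, mem_Icc]
    constructor
    · rintro ⟨hxt, hx0, _⟩
      refine ⟨hx0, ?_⟩
      rw [← hst] at hxt
      exact (Real.rpow_le_rpow_iff hx0 hs0 h1p).1 hxt
    · rintro ⟨hx0, hxs⟩
      refine ⟨?_, hx0, hxs.trans hs1⟩
      calc x ^ (1-p) ≤ s ^ (1-p) := Real.rpow_le_rpow hx0 hxs h1p.le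
        _ = t := hst
  rw [hset, Real.volume_Icc, sub_zero]

lemma aux_cdf_prod {p t : ℝ} (hp : 0 < p) (hp1 : p < 1) (ht : t ∈ Icc (0:ℝ) 1) :
    ((volume.restrict (Icc (0:ℝ) 1)).prod (volume.restrict (Icc (0:ℝ) 1)))
      {z : ℝ × ℝ | z.1 ^ (1 - p) * z.2 ≤ t} =
      ENNReal.ofReal (t ^ (1/(1-p)) + (t - t ^ (1/(1-p))) / p) := by
  have h1p : 0 < 1 - p := by linarith
  set s := t ^ (1/(1-p)) with hs
  have hs0 : 0 ≤ s := Real.rpow_nonneg ht.1 _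
  have hs1 : s ≤ 1 := Real.rpow_le_one ht.1 ht.2 (by positivity)
  have hst : s ^ (1 - p) = t := aux_s_pow hp hp1 ht
  have hBm : MeasurableSet {z : ℝ × ℝ | z.1 ^ (1 - p) * z.2 ≤ t} := by
    have hm : Measurable fun z : ℝ × ℝ => z.1 ^ (1 - p) * z.2 := by measurability
    exact measurableSet_le hm measurable_const
  rw [Measure.prod_apply hBm]
  -- inner measure formula for x ∈ Ioc 0 1
  have hinner : ∀ x ∈ Ioc (0:ℝ) 1,
      (volume.restrict (Icc (0:ℝ) 1)) (Prod.mk x ⁻¹' {z : ℝ × ℝ | z.1 ^ (1 - p) * z.2 ≤ t})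
        = ENNReal.ofReal (min (t * x ^ (p - 1)) 1) := by
    intro x hx
    have hxpow : 0 < x ^ (1 - p) := Real.rpow_pos_of_pos hx.1 _
    have hpre : Prod.mk x ⁻¹' {z : ℝ × ℝ | z.1 ^ (1 - p) * z.2 ≤ t}
        = Iic (t / x ^ (1 - p)) := by
      ext y
      simp only [mem_preimage, mem_setOf_eq, mem_Iic]
      rw [mul_comm, ← le_div_iff₀ hxpow]
    rw [hpre, Measure.restrict_apply measurableSet_Iic]
    have hc0 : 0 ≤ t / x ^ (1 - p) := div_nonneg ht.1 hxpow.le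
    have hset : Iic (t / x ^ (1 - p)) ∩ Icc 0 1 = Icc 0 (min (t / x ^ (1 - p)) 1) := by
      ext y
      simp only [mem_inter_iff, mem_Iic, mem_Icc, le_min_iff]
      tauto
    rw [hset, Real.volume_Icc, sub_zero]
    congr 1
    rw [div_eq_mul_inv, ← Real.rpow_neg hx.1.le]
    norm_num
  -- reduce outer integral to Ioc 0 1
  rw [show (∫⁻ x, (volume.restrict (Icc (0:ℝ) 1))
        (Prod.mk x ⁻¹' {z : ℝ × ℝ | z.1 ^ (1 - p) * z.2 ≤ t})
        ∂(volume.restrict (Icc (0:ℝ) 1)))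
      = ∫⁻ x in Ioc (0:ℝ) 1, ENNReal.ofReal (min (t * x ^ (p - 1)) 1) ∂volume from by
    rw [setLIntegral_congr (Ioc_ae_eq_Icc (α := ℝ) (a := 0) (b := 1)).symm]
    exact setLIntegral_congr_fun measurableSet_Ioc hinner]
  -- convert to a Bochner integral
  have hgm : Measurable fun x : ℝ => min (t * x ^ (p - 1)) 1 := by measurability
  have hgnn : ∀ x ∈ Ioc (0:ℝ) 1, 0 ≤ min (t * x ^ (p - 1)) 1 := by
    intro x hx
    have : 0 ≤ t * x ^ (p - 1) := mul_nonneg ht.1 (Real.rpow_nonneg hx.1.le _)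
    exact le_min this zero_le_one
  have hint : IntegrableOn (fun x : ℝ => min (t * x ^ (p - 1)) 1) (Ioc 0 1) volume := by
    refine (integrable_const (1:ℝ)).mono' hgm.aestronglyMeasurable ?_
    refine (ae_restrict_iff' measurableSet_Ioc).2 (ae_of_all _ fun x hx => ?_)
    rw [Real.norm_eq_abs, abs_of_nonneg (hgnn x hx)]
    exact min_le_right _ _
  rw [← ofReal_integral_eq_lintegral_ofReal hint
    ((ae_restrict_iff' measurableSet_Ioc).2 (ae_of_all _ hgnn))]
  congr 1
  -- now the real integral
  have hunion : Ioc (0:ℝ) 1 = Ioc 0 s ∪ Ioc s 1 := (Ioc_union_Ioc_eq_Ioc hs0 hs1).symm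
  have hdisj : Disjoint (Ioc (0:ℝ) s) (Ioc s 1) := Ioc_disjoint_Ioc_of_le le_rfl
  have hint1 : IntegrableOn (fun x : ℝ => min (t * x ^ (p - 1)) 1) (Ioc 0 s) volume :=
    hint.mono_set (by rw [hunion]; exact subset_union_left)
  have hint2 : IntegrableOn (fun x : ℝ => min (t * x ^ (p - 1)) 1) (Ioc s 1) volume :=
    hint.mono_set (by rw [hunion]; exact subset_union_right)
  rw [hunion, setIntegral_union hdisj measurableSet_Ioc hint1 hint2]
  have hI1 : ∫ x in Ioc (0:ℝ) s, min (t * x ^ (p - 1)) 1 = s := by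
    rw [setIntegral_congr_fun measurableSet_Ioc
      (fun x hx => show min (t * x ^ (p - 1)) 1 = 1 from ?_)]
    · simp [Real.volume_Ioc, sub_zero, hs0]
    · -- on (0, s], t * x^(p-1) ≥ 1
      have hx0 : 0 < x := hx.1
      have hxp : 0 < x ^ (1 - p) := Real.rpow_pos_of_pos hx0 _
      have hxt : x ^ (1 - p) ≤ t := by
        rw [← hst]; exact Real.rpow_le_rpow hx0.le hx.2 h1p.le
      refine min_eq_right ?_
      have : t * x ^ (p - 1) = t / x ^ (1 - p) := by
        rw [div_eq_mul_inv, ← Real.rpow_neg hx0.le]; norm_num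
      rw [this, le_div_iff₀ hxp, one_mul]
      exact hxt
  have hI2 : ∫ x in Ioc s 1, min (t * x ^ (p - 1)) 1 = (t - s) / p := by
    rw [setIntegral_congr_fun measurableSet_Ioc
      (fun x hx => show min (t * x ^ (p - 1)) 1 = t * x ^ (p - 1) from ?_)]
    · rw [← intervalIntegral.integral_of_le hs1, intervalIntegral.integral_const_mul,
        integral_rpow (Or.inl (by linarith : (-1:ℝ) < p - 1))]
      have hp1' : p - 1 + 1 = p := by ring
      rw [hp1', Real.one_rpow]
      have := aux_t_mul_s_pow hp hp1 ht
      field_simp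
      linarith [this]
    · have hx0 : 0 < x := lt_of_le_of_lt hs0 hx.1
      have hxp : 0 < x ^ (1 - p) := Real.rpow_pos_of_pos hx0 _
      have hxt : t ≤ x ^ (1 - p) := by
        rw [← hst]; exact Real.rpow_le_rpow hs0 hx.1.le h1p.le
      refine min_eq_left ?_
      have heq : t * x ^ (p - 1) = t / x ^ (1 - p) := by
        rw [div_eq_mul_inv, ← Real.rpow_neg hx0.le]; norm_num
      rw [heq, div_le_one hxp]
      exact hxt
  rw [hI1, hI2]

set_option maxHeartbeats 1000000 in
/-- Let `p ∈ (0,1)`, and let `U₀`, `U₁`, `I` be mutually independent random variables where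
`U₀` and `U₁` are uniform on `[0,1]` and `I` is Bernoulli with success probability `p`.
Then `U₀^(1-p) * U₁^I` is uniform on `[0,1]`. -/
theorem uniform_of_coxian_representation
    {Ω : Type*} [MeasurableSpace Ω] (P : Measure Ω) [IsProbabilityMeasure P]
    (p : ℝ) (hp : p ∈ Ioo (0 : ℝ) 1)
    (U₀ U₁ I : Ω → ℝ)
    (hU₀ : Measurable U₀) (hU₁ : Measurable U₁) (hI : Measurable I)
    (hindep : iIndepFun (m := fun _ : Fin 3 => (inferInstance : MeasurableSpace ℝ))
      ![U₀, U₁, I] P)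
    (hU₀law : P.map U₀ = volume.restrict (Icc (0 : ℝ) 1))
    (hU₁law : P.map U₁ = volume.restrict (Icc (0 : ℝ) 1))
    (hI01 : ∀ ω, I ω = 0 ∨ I ω = 1)
    (hIp : P {ω | I ω = 1} = ENNReal.ofReal p) :
    P.map (fun ω => U₀ ω ^ (1 - p) * U₁ ω ^ I ω) = volume.restrict (Icc (0 : ℝ) 1) := by
  obtain ⟨hp0, hp1⟩ := hp
  have h1p : 0 < 1 - p := by linarith
  set X : Ω → ℝ := fun ω => U₀ ω ^ (1 - p) * U₁ ω ^ I ω with hXdef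
  have hX : Measurable X :=
    ((aux_meas_rpow_const (1 - p)).comp hU₀).mul
      (aux_meas_rpow2.comp (hU₁.prodMk hI))
  -- a.e. membership facts
  have hmem : ∀ (U : Ω → ℝ), Measurable U → P.map U = volume.restrict (Icc (0:ℝ) 1) →
      ∀ᵐ ω ∂P, U ω ∈ Icc (0:ℝ) 1 := by
    intro U hU hUlaw
    have h1 : P (U ⁻¹' Icc (0:ℝ) 1) = 1 := by
      rw [← Measure.map_apply hU measurableSet_Icc, hUlaw,
        Measure.restrict_apply measurableSet_Icc, inter_self, Real.volume_Icc]
      norm_num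
    rw [ae_iff]
    have : {ω | ¬ U ω ∈ Icc (0:ℝ) 1} = (U ⁻¹' Icc (0:ℝ) 1)ᶜ := rfl
    rw [this, prob_compl_eq_one_sub (hU measurableSet_Icc), h1, tsub_self]
  have hU₀ae := hmem U₀ hU₀ hU₀law
  have hU₁ae := hmem U₁ hU₁ hU₁law
  have hXmem : ∀ᵐ ω ∂P, X ω ∈ Icc (0:ℝ) 1 := by
    filter_upwards [hU₀ae, hU₁ae] with ω h0 h1
    have ha : U₀ ω ^ (1 - p) ∈ Icc (0:ℝ) 1 :=
      ⟨Real.rpow_nonneg h0.1 _, Real.rpow_le_one h0.1 h0.2 h1p.le⟩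
    have hb : U₁ ω ^ I ω ∈ Icc (0:ℝ) 1 := by
      rcases hI01 ω with h | h
      · rw [h, Real.rpow_zero]; exact ⟨zero_le_one, le_refl 1⟩
      · rw [h, Real.rpow_one]; exact h1
    exact ⟨mul_nonneg ha.1 hb.1, mul_le_one₀ ha.2 hb.1 hb.2⟩
  -- independence facts
  have hmeasvec : ∀ i, Measurable (![U₀, U₁, I] i) := by
    intro i; fin_cases i <;> simpa
  have h01 : IndepFun U₀ U₁ P := by
    have := hindep.indepFun (show (0 : Fin 3) ≠ 1 by decide)
    simpa using this
  have h02 : IndepFun U₀ I P := by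
    have := hindep.indepFun (show (0 : Fin 3) ≠ 2 by decide)
    simpa using this
  have hpairI : IndepFun (fun ω => (U₀ ω, U₁ ω)) I P := by
    have := hindep.indepFun_prodMk hmeasvec 0 1 2 (by decide) (by decide)
    simpa using this
  have hjoint : P.map (fun ω => (U₀ ω, U₁ ω)) =
      (volume.restrict (Icc (0:ℝ) 1)).prod (volume.restrict (Icc (0:ℝ) 1)) := by
    rw [(indepFun_iff_map_prod_eq_prod_map_map hU₀.aemeasurable hU₁.aemeasurable).1 h01,
      hU₀law, hU₁law]
  -- Bernoulli probabilities
  have hA1 : P (I ⁻¹' {(1:ℝ)}) = ENNReal.ofReal p := hIp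
  have hA0 : P (I ⁻¹' {(0:ℝ)}) = ENNReal.ofReal (1 - p) := by
    have hcompl : I ⁻¹' {(0:ℝ)} = (I ⁻¹' {(1:ℝ)})ᶜ := by
      ext ω
      simp only [mem_preimage, mem_singleton_iff, mem_compl_iff]
      rcases hI01 ω with h | h <;> simp [h]
    rw [hcompl, prob_compl_eq_one_sub (hI (measurableSet_singleton 1)), hA1]
    rw [ENNReal.ofReal_sub _ hp0.le, ENNReal.ofReal_one]
  -- prove equality of measures via CDFs
  have : IsProbabilityMeasure (P.map X) := Measure.isProbabilityMeasure_map hX.aemeasurable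
  refine Measure.ext_of_Iic _ _ fun t => ?_
  rw [Measure.map_apply hX measurableSet_Iic, Measure.restrict_apply measurableSet_Iic]
  rcases lt_or_ge t 0 with htneg | ht0
  · -- t < 0
    have hleft : P (X ⁻¹' Iic t) = 0 := by
      refine measure_mono_null ?_ (ae_iff.1 hXmem)
      intro ω hω
      simp only [mem_preimage, mem_Iic] at hω
      simp only [mem_setOf_eq, mem_Icc, not_and_or, not_le]
      left; exact lt_of_le_of_lt hω htneg
    have hright : Iic t ∩ Icc (0:ℝ) 1 = ∅ := by
      ext x
      simp only [mem_inter_iff, mem_Iic, mem_Icc, mem_empty_iff_false, iff_false]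
      rintro ⟨h1, h2, _⟩; linarith
    rw [hleft, hright, measure_empty]
  rcases le_or_gt t 1 with ht1 | htgt
  · -- main case t ∈ [0,1]
    have ht : t ∈ Icc (0:ℝ) 1 := ⟨ht0, ht1⟩
    set s := t ^ (1/(1-p)) with hsdef
    have hs0 : 0 ≤ s := Real.rpow_nonneg ht0 _
    have hts : s ≤ t := aux_rpow_le hp0 hp1 ht
    -- measurable sets
    have hm1 : MeasurableSet {x : ℝ | x ^ (1 - p) ≤ t} := by
      exact measurableSet_le (aux_meas_rpow_const (1 - p)) measurable_const
    have hm2 : MeasurableSet {z : ℝ × ℝ | z.1 ^ (1 - p) * z.2 ≤ t} := by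
      exact measurableSet_le (aux_meas_prod (1 - p)) measurable_const
    -- event splitting
    have hsplit : X ⁻¹' Iic t =
        (U₀ ⁻¹' {x : ℝ | x ^ (1 - p) ≤ t} ∩ I ⁻¹' {(0:ℝ)}) ∪
        ((fun ω => (U₀ ω, U₁ ω)) ⁻¹' {z : ℝ × ℝ | z.1 ^ (1 - p) * z.2 ≤ t}
          ∩ I ⁻¹' {(1:ℝ)}) := by
      ext ω
      simp only [mem_preimage, mem_Iic, mem_inter_iff, mem_union, mem_setOf_eq,
        mem_singleton_iff, hXdef]
      rcases hI01 ω with h | h <;>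
        simp [h, Real.rpow_zero, Real.rpow_one]
    have hdisj : Disjoint
        (U₀ ⁻¹' {x : ℝ | x ^ (1 - p) ≤ t} ∩ I ⁻¹' {(0:ℝ)})
        ((fun ω => (U₀ ω, U₁ ω)) ⁻¹' {z : ℝ × ℝ | z.1 ^ (1 - p) * z.2 ≤ t}
          ∩ I ⁻¹' {(1:ℝ)}) := by
      refine Set.disjoint_left.2 ?_
      rintro ω ⟨-, h0⟩ ⟨-, h1⟩
      simp only [mem_preimage, mem_singleton_iff] at h0 h1
      rw [h0] at h1; norm_num at h1
    have hmeas2 : MeasurableSet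
        ((fun ω => (U₀ ω, U₁ ω)) ⁻¹' {z : ℝ × ℝ | z.1 ^ (1 - p) * z.2 ≤ t}
          ∩ I ⁻¹' {(1:ℝ)}) :=
      (((hU₀.prodMk hU₁) hm2)).inter (hI (measurableSet_singleton 1))
    rw [hsplit, measure_union hdisj hmeas2]
    -- apply independence
    rw [h02.measure_inter_preimage_eq_mul _ _ hm1 (measurableSet_singleton 0),
      hpairI.measure_inter_preimage_eq_mul _ _ hm2 (measurableSet_singleton 1)]
    rw [← Measure.map_apply hU₀ hm1, hU₀law,
      ← Measure.map_apply (hU₀.prodMk hU₁) hm2, hjoint, hA0, hA1]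
    rw [aux_cdf_one hp0 hp1 ht, aux_cdf_prod hp0 hp1 ht]
    -- final arithmetic
    have hright : Iic t ∩ Icc (0:ℝ) 1 = Icc 0 t := by
      ext x
      simp only [mem_inter_iff, mem_Iic, mem_Icc]
      constructor
      · rintro ⟨h1, h2, _⟩; exact ⟨h2, h1⟩
      · rintro ⟨h1, h2⟩; exact ⟨h2, h1, h2.trans ht1⟩
    rw [hright, Real.volume_Icc, sub_zero]
    have hnn2 : 0 ≤ s + (t - s) / p :=
      add_nonneg hs0 (div_nonneg (by linarith) hp0.le)
    rw [← ENNReal.ofReal_mul hs0, ← ENNReal.ofReal_mul hnn2,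
      ← ENNReal.ofReal_add (mul_nonneg hs0 h1p.le)
        (mul_nonneg hnn2 hp0.le)]
    congr 1
    field_simp
    ring
  · -- t > 1
    have haet : ∀ᵐ ω ∂P, X ω ≤ t := hXmem.mono fun ω h => h.2.trans htgt.le
    have hleft : P (X ⁻¹' Iic t) = 1 := by
      have h0 : P ((X ⁻¹' Iic t)ᶜ) = 0 := ae_iff.1 haet
      have hadd := measure_add_measure_compl (μ := P) (s := X ⁻¹' Iic t) (hX measurableSet_Iic)
      rw [h0, add_zero, measure_univ] at hadd
      exact hadd
    have hright : Iic t ∩ Icc (0:ℝ) 1 = Icc 0 1 :=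
      inter_eq_self_of_subset_right fun x hx => le_trans hx.2 htgt.le
    rw [hleft, hright, Real.volume_Icc]
    norm_num
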